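/- Let L be a complete modular lattice which is Noetherian. Define the iterated socle s : ℕ → L by s(0) = ⊥ and s(n+1) = the supremum of the set of all atoms of the interval [s(n), ⊤], i.e., the supremum of { m ∈ L : s(n) < m and there is no x with s(n) < x < m }. If there exists n ∈ ℕ with s(n) = ⊤ (i.e., L is hyper-semiatomic), then L is Artinian. -/

import Mathlib

/-- Well-foundedness of `<` on the interval `[a, b]`. -/
private def WFI {L : Type*} [Lattice L] (a b : L) : Prop :=
  WellFounded ((· < ·) : Set.Icc a b → Set.Icc a b → Prop)

private lemma wfi_of_wcovBy {L : Type*} [Lattice L] {c d : L} (h : c ⩿ d) : WFI c d := by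
  have accc : ∀ z : Set.Icc c d, z.1 = c → Acc (· < ·) z := by
    intro z hz
    refine Acc.intro z fun y hy => absurd hy ?_
    have : ¬ (y.1 < z.1) := by rw [hz]; exact not_lt_of_ge y.2.1
    exact fun hlt => this (Subtype.coe_lt_coe.mpr hlt)
  constructor
  intro x
  refine Acc.intro x fun y hy => accc y ?_
  have hyd : y.1 < d := lt_of_lt_of_le (Subtype.coe_lt_coe.mpr hy) x.2.2
  rcases (y.2.1).lt_or_eq with h1 | h1
  · exact absurd hyd (h.2 h1)
  · exact h1.symm

private lemma wfi_glue {L : Type*} [Lattice L] [IsModularLattice L] {a c b : L}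
    (hac : a ≤ c) (hcb : c ≤ b) (h1 : WFI a c) (h2 : WFI c b) : WFI a b := by
  haveI : WellFoundedLT (Set.Icc a c) := ⟨h1⟩
  haveI : WellFoundedLT (Set.Icc c b) := ⟨h2⟩
  have hprod : WellFounded ((· < ·) : (Set.Icc a c × Set.Icc c b) →
      (Set.Icc a c × Set.Icc c b) → Prop) := Prod.wellFoundedLT'.wf
  refine Subrelation.wf (r := InvImage (· < ·) (fun x : Set.Icc a b =>
    ((⟨x.1 ⊓ c, le_inf x.2.1 hac, inf_le_right⟩ : Set.Icc a c),
     (⟨x.1 ⊔ c, le_sup_right, sup_le x.2.2 hcb⟩ : Set.Icc c b)))) ?_ (InvImage.wf _ hprod)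
  intro x y hxy
  have hxy' : x.1 < y.1 := hxy
  have hinf : x.1 ⊓ c ≤ y.1 ⊓ c := inf_le_inf_right c hxy'.le
  have hsup : x.1 ⊔ c ≤ y.1 ⊔ c := sup_le_sup_right hxy'.le c
  have hne : x.1 ⊓ c < y.1 ⊓ c ∨ x.1 ⊔ c < y.1 ⊔ c := by
    by_contra hcon
    push_neg at hcon
    have h1 : y.1 ⊓ c ≤ x.1 ⊓ c := (hinf.lt_or_eq.resolve_left hcon.1).symm.le
    have h2 : y.1 ⊔ c ≤ x.1 ⊔ c := (hsup.lt_or_eq.resolve_left hcon.2).symm.le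
    exact hxy'.ne (eq_of_le_of_inf_le_of_sup_le hxy'.le h1 h2)
  rcases hne with h | h
  · exact Prod.lt_iff.mpr (Or.inl ⟨Subtype.mk_lt_mk.mpr h, Subtype.mk_le_mk.mpr hsup⟩)
  · exact Prod.lt_iff.mpr (Or.inr ⟨Subtype.mk_le_mk.mpr hinf, Subtype.mk_lt_mk.mpr h⟩)

/-- A complete modular Noetherian lattice which is hyper-semiatomic is Artinian.
Here `s 0 = ⊥` and `s (n+1)` is the supremum, inside the interval `[s n, ⊤]`, of the
set of atoms of that interval (so `s (n+1) = s n` if there are no such atoms). -/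
theorem stmt_8 {L : Type*} [CompleteLattice L] [IsModularLattice L]
    (hnoeth : WellFounded ((· > ·) : L → L → Prop))
    (s : ℕ → L) (h0 : s 0 = ⊥)
    (hsucc : ∀ n, s (n + 1) = s n ⊔ sSup {m : L | s n < m ∧ ¬ ∃ x, s n < x ∧ x < m})
    (hfull : ∃ n, s n = ⊤) :
    WellFounded ((· < ·) : L → L → Prop) := by
  classical
  haveI : WellFoundedGT L := ⟨hnoeth⟩
  -- monotonicity of s
  have hmono : ∀ n, s n ≤ s (n + 1) := fun n => by rw [hsucc n]; exact le_sup_left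
  -- key induction: WFI ⊥ (s n)
  have key : ∀ n, WFI ⊥ (s n) := by
    intro n
    induction n with
    | zero => rw [h0]; exact wfi_of_wcovBy (WCovBy.refl ⊥)
    | succ n ih =>
      refine wfi_glue bot_le (hmono n) ih ?_
      set S : Set L := {m : L | s n < m ∧ ¬ ∃ x, s n < x ∧ x < m} with hS
      obtain ⟨t, htS, htsup⟩ := CompleteLattice.WellFoundedGT.isSupFiniteCompact L S
      have hcov : ∀ m ∈ S, s n ⋖ m := by
        rintro m ⟨h1, h2⟩
        exact ⟨h1, fun c hc1 hc2 => h2 ⟨c, hc1, hc2⟩⟩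
      -- by induction on finsets of atoms
      have main : ∀ u : Finset L, ↑u ⊆ S → WFI (s n) (s n ⊔ u.sup id) := by
        intro u
        induction u using Finset.induction_on with
        | empty =>
          intro _
          simp only [Finset.sup_empty, sup_bot_eq]
          exact wfi_of_wcovBy (WCovBy.refl _)
        | insert m u' hm ihu =>
          intro hsub
          have hmS : m ∈ S := hsub (Finset.mem_insert_self m u')
          have hu'S : ↑u' ⊆ S := fun x hx => hsub (Finset.mem_insert_of_mem hx)
          set b := s n ⊔ u'.sup id with hb
          have hrw : s n ⊔ (insert m u').sup id = b ⊔ m := by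
            rw [Finset.sup_insert]
            simp only [id]
            rw [hb, sup_comm m (u'.sup id), ← sup_assoc]
          rw [hrw]
          have hsb : s n ≤ b := le_sup_left
          refine wfi_glue hsb le_sup_left (ihu hu'S) ?_
          -- b ⩿ b ⊔ m
          have hcm : s n ⋖ m := hcov m hmS
          have : b ⊓ m = s n ∨ b ⊓ m = m :=
            hcm.eq_or_eq (le_inf hsb hcm.1.le) inf_le_right
          rcases this with h | h
          · have h' : m ⊓ b ⋖ m := by rw [inf_comm, h]; exact hcm
            have hbc : b ⋖ m ⊔ b := covBy_sup_of_inf_covBy_left h'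
            rw [sup_comm m b] at hbc
            exact wfi_of_wcovBy hbc.wcovBy
          · have : m ≤ b := by rw [← h]; exact inf_le_left
            rw [sup_eq_left.mpr this]
            exact wfi_of_wcovBy (WCovBy.refl _)
      rw [hsucc n, htsup]
      exact main t htS
  obtain ⟨n, hn⟩ := hfull
  have := key n
  rw [hn] at this
  refine Subrelation.wf (r := InvImage (· < ·)
    (fun x : L => (⟨x, bot_le, le_top⟩ : Set.Icc (⊥ : L) ⊤))) ?_ (InvImage.wf _ this)
  intro x y hxy
  exact Subtype.mk_lt_mk.mpr hxy
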